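/- Let n ≥ 1 be an integer, h ≠ 0 a real number, x₀ any real number, and P a real polynomial of degree at most 2n. Then P′(x₀) = (1/(2h)) ∑_{m=1}^{n} α_m^{(1)}(n) · (P(x₀ + mh) − P(x₀ − mh)). -/

import Mathlib

open Finset Polynomial

/-- `π_m(n) = ∏_{k=1, k ≠ m}^{n} (1 - m²/k²)`. -/
noncomputable def pim (n m : ℕ) : ℝ :=
  ∏ k ∈ (Finset.Icc 1 n).erase m, (1 - (m : ℝ) ^ 2 / (k : ℝ) ^ 2)

/-- `α_m^{(1)}(n) = 1 / (m · π_m(n))`. -/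
noncomputable def alpha1 (n m : ℕ) : ℝ := 1 / ((m : ℝ) * pim n m)

lemma sq_injOn (n : ℕ) : Set.InjOn (fun m : ℕ => (m : ℝ) ^ 2) (Finset.Icc 1 n) := by
  intro a _ b _ hab
  simp only at hab
  have : (a : ℝ) = (b : ℝ) := by
    have ha : (0:ℝ) ≤ a := Nat.cast_nonneg a
    have hb : (0:ℝ) ≤ b := Nat.cast_nonneg b
    nlinarith [sq_nonneg ((a:ℝ) - b), sq_nonneg ((a:ℝ) + b)]
  exact_mod_cast this

lemma eval_basis_zero (n : ℕ) (hn : 1 ≤ n) (m : ℕ) (hm : m ∈ Finset.Icc 1 n) :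
    Polynomial.eval (0:ℝ) (Lagrange.basis (Finset.Icc 1 n) (fun k : ℕ => (k:ℝ)^2) m)
      = (pim n m)⁻¹ := by
  rw [Lagrange.basis, eval_prod, pim, ← Finset.prod_inv_distrib]
  refine Finset.prod_congr rfl fun k hk => ?_
  obtain ⟨hkm, hk'⟩ := Finset.mem_erase.mp hk
  have hk1 : 1 ≤ k := (Finset.mem_Icc.mp hk').1
  have hkR : (k : ℝ) ≠ 0 := by positivity
  have hne : (m : ℝ)^2 ≠ (k : ℝ)^2 := by
    intro hcon
    exact hkm (sq_injOn n hk' hm hcon.symm)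
  simp only [Lagrange.basisDivisor, eval_mul, eval_C, eval_sub, eval_X]
  have hmk : (m:ℝ)^2 - (k:ℝ)^2 ≠ 0 := sub_ne_zero.mpr hne
  have h2 : (1 - (m:ℝ)^2/(k:ℝ)^2) = ((k:ℝ)^2 - (m:ℝ)^2)/(k:ℝ)^2 := by
    field_simp
  rw [h2, inv_div]
  have hkm2 : (k:ℝ)^2 - (m:ℝ)^2 ≠ 0 := by intro hc; apply hmk; linarith
  rw [eq_div_iff hkm2, inv_mul_eq_div, div_mul_eq_mul_div, div_eq_iff hmk]
  ring

lemma lemA (n i : ℕ) (hn : 1 ≤ n) (hi : i < n) :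
    ∑ m ∈ Finset.Icc 1 n, ((m:ℝ)^2)^i / pim n m = if i = 0 then 1 else 0 := by
  have hvs := sq_injOn n
  have hcard : (Finset.Icc 1 n).card = n := by
    rw [Nat.card_Icc]; omega
  have hdeg : (Polynomial.X ^ i : ℝ[X]).degree < (Finset.Icc 1 n).card := by
    rw [hcard, Polynomial.degree_X_pow]
    exact_mod_cast hi
  have h := Lagrange.eq_interpolate hvs hdeg
  have := congrArg (Polynomial.eval (0:ℝ)) h
  rw [Lagrange.interpolate_apply, Polynomial.eval_finset_sum] at this
  simp only [eval_mul, eval_C, eval_pow, eval_X] at this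
  rw [zero_pow_eq] at this
  rw [this]
  refine Finset.sum_congr rfl fun m hm => ?_
  rw [eval_basis_zero n hn m hm, div_eq_mul_inv]

lemma lemC (n j : ℕ) (hn : 1 ≤ n) (hj : j ≤ 2 * n) :
    ∑ m ∈ Finset.Icc 1 n, alpha1 n m * ((m:ℝ)^j - (-(m:ℝ))^j)
      = if j = 1 then 2 else 0 := by
  rcases Nat.even_or_odd j with hje | hjo
  · have : ∀ m ∈ Finset.Icc 1 n, alpha1 n m * ((m:ℝ)^j - (-(m:ℝ))^j) = 0 := by
      intro m _
      rw [hje.neg_pow, sub_self, mul_zero]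
    rw [Finset.sum_eq_zero this, if_neg (by rintro rfl; norm_num at hje)]
  · obtain ⟨i, rfl⟩ := hjo
    have hi : i < n := by omega
    have key : ∀ m ∈ Finset.Icc 1 n,
        alpha1 n m * ((m:ℝ)^(2*i+1) - (-(m:ℝ))^(2*i+1)) = 2 * (((m:ℝ)^2)^i / pim n m) := by
      intro m hm
      have hm1 : 1 ≤ m := (Finset.mem_Icc.mp hm).1
      have hmR : (m : ℝ) ≠ 0 := by positivity
      rw [(Odd.neg_pow ⟨i, by ring⟩ (m:ℝ) : (-(m:ℝ))^(2*i+1) = -(m:ℝ)^(2*i+1))]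
      rw [alpha1]
      rw [sub_neg_eq_add, ← two_mul]
      have : ((m:ℝ))^(2*i+1) = (m:ℝ) * ((m:ℝ)^2)^i := by ring
      rw [this]
      field_simp
    rw [Finset.sum_congr rfl key, ← Finset.mul_sum, lemA n i hn hi]
    by_cases hi0 : i = 0
    · subst hi0; norm_num
    · rw [if_neg hi0, if_neg (by omega)]; ring

lemma lemB (n : ℕ) (hn : 1 ≤ n) (Q : Polynomial ℝ) (hQ : Q.natDegree < 2 * n + 1) :
    (Polynomial.derivative Q).eval 0
      = (1/2) * ∑ m ∈ Finset.Icc 1 n, alpha1 n m * (Q.eval (m:ℝ) - Q.eval (-(m:ℝ))) := by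
  have heval : ∀ x : ℝ, Q.eval x = ∑ j ∈ Finset.range (2*n+1), Q.coeff j * x ^ j := fun x =>
    Polynomial.eval_eq_sum_range' hQ x
  have hsum : ∀ m ∈ Finset.Icc 1 n,
      alpha1 n m * (Q.eval (m:ℝ) - Q.eval (-(m:ℝ)))
        = ∑ j ∈ Finset.range (2*n+1), Q.coeff j * (alpha1 n m * ((m:ℝ)^j - (-(m:ℝ))^j)) := by
    intro m _
    rw [heval, heval, ← Finset.sum_sub_distrib, Finset.mul_sum]
    refine Finset.sum_congr rfl fun j _ => ?_
    ring
  rw [Finset.sum_congr rfl hsum, Finset.sum_comm]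
  simp_rw [← Finset.mul_sum]
  rw [Finset.mul_sum]
  have : ∀ j ∈ Finset.range (2*n+1),
      (1/2) * (Q.coeff j * ∑ m ∈ Finset.Icc 1 n, alpha1 n m * ((m:ℝ)^j - (-(m:ℝ))^j))
        = Q.coeff j * (if j = 1 then 1 else 0) := by
    intro j hj
    rw [lemC n j hn (by simp at hj; omega)]
    split <;> ring
  rw [Finset.sum_congr rfl this]
  simp only [mul_ite, mul_one, mul_zero]
  rw [Finset.sum_ite_eq' (Finset.range (2*n+1)) 1 (fun j => Q.coeff j),
    if_pos (Finset.mem_range.mpr (by omega))]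
  rw [← Polynomial.coeff_zero_eq_eval_zero, Polynomial.coeff_derivative]
  norm_num

/-- for every `n ≥ 1`, `h ≠ 0`, arbitrary real `x₀` and real polynomial `P`
of degree at most `2n`,
`P′(x₀) = (1/(2h)) ∑_{m=1}^{n} α_m^{(1)}(n) (P(x₀ + mh) - P(x₀ - mh))`. -/
theorem central_diff_first_deriv_exact_at (n : ℕ) (hn : 1 ≤ n) (h : ℝ) (hh : h ≠ 0)
    (x₀ : ℝ) (P : Polynomial ℝ) (hP : P.degree ≤ 2 * n) :
    (Polynomial.derivative P).eval x₀ =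
      (1 / (2 * h)) *
        ∑ m ∈ Finset.Icc 1 n,
          alpha1 n m * (P.eval (x₀ + (m : ℝ) * h) - P.eval (x₀ - (m : ℝ) * h)) := by
  set Q := P.comp (Polynomial.C x₀ + Polynomial.C h * Polynomial.X) with hQdef
  have hdeg1 : (Polynomial.C x₀ + Polynomial.C h * Polynomial.X).natDegree = 1 := by
    rw [add_comm]; exact Polynomial.natDegree_linear hh
  have hPnat : P.natDegree ≤ 2 * n := Polynomial.natDegree_le_iff_degree_le.mpr (by exact_mod_cast hP)
  have hQdeg : Q.natDegree < 2 * n + 1 := by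
    rw [hQdef, Polynomial.natDegree_comp, hdeg1, mul_one]; omega
  have hB := lemB n hn Q hQdeg
  have hqe : ∀ t : ℝ, Q.eval t = P.eval (x₀ + h * t) := by
    intro t; rw [hQdef, Polynomial.eval_comp]; simp
  have hder : (Polynomial.derivative Q).eval 0 = h * (Polynomial.derivative P).eval x₀ := by
    rw [hQdef, Polynomial.derivative_comp]
    simp [Polynomial.eval_comp]
  rw [hder] at hB
  have hsum : ∑ m ∈ Finset.Icc 1 n, alpha1 n m * (Q.eval (m:ℝ) - Q.eval (-(m:ℝ)))
      = ∑ m ∈ Finset.Icc 1 n,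
          alpha1 n m * (P.eval (x₀ + (m : ℝ) * h) - P.eval (x₀ - (m : ℝ) * h)) := by
    refine Finset.sum_congr rfl fun m _ => ?_
    rw [hqe, hqe, show x₀ + h * (m:ℝ) = x₀ + (m:ℝ) * h by ring,
      show x₀ + h * (-(m:ℝ)) = x₀ - (m:ℝ) * h by ring]
  rw [hsum] at hB
  field_simp
  simp only [mul_comm h] at hB ⊢
  linarith [hB]
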